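/- Assume each synthesiser map g_t is twice continuously differentiable. Then for every 1 ≤ t ≤ T there exist constants K > 0 and α₀ > 0 such that for all 0 < α ≤ α₀, ‖θ_t^{BP}(α) − θ_0 − α Σ_{a=0}^{t−1} Δ̄_a^t‖₂ ≤ K α²; that is, the accumulate BP(λ) iterate deviates from its first-order expansion by O(α²). -/

import Mathlib

open Filter Finset Matrix

noncomputable section

/-- The Euclidean (ℓ²) norm of a finite real vector. -/
def euclNorm {k : ℕ} (x : Fin k → ℝ) : ℝ := Real.sqrt (∑ i, x i ^ 2)

/-- Data of the synthetic-gradient setting: the gradient discount factor `γ`,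
the trace-decay parameter `lam` (λ), the RNN Jacobians `J t = ∂h_{t+1}/∂h_t`,
the immediate loss gradients `c t = ∂L_t/∂h_t` (row vectors), the synthesiser
maps `g t : θ ↦ g(h_t; θ)` (producing row vectors), and the initial parameter `θ0`. -/
structure SGData (d m : ℕ) where
  γ : ℝ
  lam : ℝ
  J : ℕ → Matrix (Fin d) (Fin d) ℝ
  c : ℕ → Fin d → ℝ
  g : ℕ → (Fin m → ℝ) → Fin d → ℝ
  θ0 : Fin m → ℝ

namespace SGData

variable {d m : ℕ}

/-- Propagator `Pfrom a n = P(a+n, a) = J_{a+n-1} ⋯ J_a`. -/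
def Pfrom (p : SGData d m) (a : ℕ) : ℕ → Matrix (Fin d) (Fin d) ℝ
  | 0 => 1
  | n + 1 => p.J (a + n) * p.Pfrom a n

/-- Propagator `P b a = P(b, a) = J_{b-1} ⋯ J_a` (for `b ≥ a`). -/
def P (p : SGData d m) (b a : ℕ) : Matrix (Fin d) (Fin d) ℝ := p.Pfrom a (b - a)

/-- The Jacobian matrix `Dg_t(θ) ∈ ℝ^{d×m}` of the synthesiser map `g t` at `θ`. -/
def Dg (p : SGData d m) (t : ℕ) (θ : Fin m → ℝ) : Matrix (Fin d) (Fin m) ℝ :=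
  Matrix.of fun i j => fderiv ℝ (p.g t) θ (Pi.single j 1) i

/-- The temporal-difference error `δ_t` at parameter `θ`:
`δ_t = (c_{t+1} + γ g_{t+1}(θ)) J_t − g_t(θ)`. -/
def tdErr (p : SGData d m) (t : ℕ) (θ : Fin m → ℝ) : Fin d → ℝ :=
  Matrix.vecMul (p.c (t + 1) + p.γ • p.g (t + 1) θ) (p.J t) - p.g t θ

/-- The accumulate BP(λ) state `(θ_t^{BP}, e_t)` with learning rate `α`:
`θ_0^{BP} = θ0`, `e_0 = Dg_0(θ_0^{BP})`,
`θ_{t+1}^{BP} = θ_t^{BP} + α (δ_t e_t)ᵀ`, `e_{t+1} = γλ J_t e_t + Dg_{t+1}(θ_{t+1}^{BP})`. -/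
def BPstate (p : SGData d m) (α : ℝ) : ℕ → (Fin m → ℝ) × Matrix (Fin d) (Fin m) ℝ
  | 0 => (p.θ0, p.Dg 0 p.θ0)
  | t + 1 =>
    let s := p.BPstate α t
    let θ' := s.1 + α • Matrix.vecMul (p.tdErr t s.1) s.2
    (θ', (p.γ * p.lam) • (p.J t * s.2) + p.Dg (t + 1) θ')

/-- The accumulate BP(λ) iterate `θ_t^{BP}(α)`. -/
def θBP (p : SGData d m) (α : ℝ) (t : ℕ) : Fin m → ℝ := (p.BPstate α t).1

/-- `Ḡ_a^{(n)}`: the n-step synthetic gradient with the bootstrap estimate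
evaluated at the initial parameter `θ0`. -/
def Gbar (p : SGData d m) (a n : ℕ) : Fin d → ℝ :=
  (∑ k ∈ Finset.range n, p.γ ^ k • Matrix.vecMul (p.c (a + k + 1)) (p.P (a + k + 1) a))
    + p.γ ^ n • Matrix.vecMul (p.g (a + n) p.θ0) (p.P (a + n) a)

/-- `Ḡ_a^{λ|t}`: the interim λ-weighted synthetic gradient evaluated at `θ0`. -/
def GbarLam (p : SGData d m) (a t : ℕ) : Fin d → ℝ :=
  (1 - p.lam) • (∑ n ∈ Finset.range (t - a - 1), p.lam ^ n • p.Gbar a (n + 1))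
    + p.lam ^ (t - a - 1) • p.Gbar a (t - a)

/-- `Δ̄_a^t = ((Ḡ_a^{λ|t} − g_a(θ0)) Dg_a(θ0))ᵀ ∈ ℝ^m`. -/
def Δbar (p : SGData d m) (a t : ℕ) : Fin m → ℝ :=
  Matrix.vecMul (p.GbarLam a t - p.g a p.θ0) (p.Dg a p.θ0)

/-- Online n-step target `G_k^{(n)}` using bootstrap estimates
`ĝ_s = g_s(hist (s−1))` taken from the online history `hist`. -/
def GnOn (p : SGData d m) (hist : ℕ → Fin m → ℝ) (k n : ℕ) : Fin d → ℝ :=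
  (∑ j ∈ Finset.range n, p.γ ^ j • Matrix.vecMul (p.c (k + j + 1)) (p.P (k + j + 1) k))
    + p.γ ^ n • Matrix.vecMul (p.g (k + n) (hist (k + n - 1))) (p.P (k + n) k)

/-- Online interim target `G_k^{λ|H}` with horizon `H`. -/
def GLamOn (p : SGData d m) (hist : ℕ → Fin m → ℝ) (H k : ℕ) : Fin d → ℝ :=
  (1 - p.lam) • (∑ n ∈ Finset.range (H - k - 1), p.lam ^ n • p.GnOn hist k (n + 1))
    + p.lam ^ (H - k - 1) • p.GnOn hist k (H - k)

/-- Inner pass of the online λ-SG algorithm at horizon `H`: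
`φ_0 = θ^{⟨H−1⟩}` and `φ_{k+1} = φ_k + α ((G_k^{λ|H} − g_k(φ_k)) Dg_k(φ_k))ᵀ`. -/
def phi (p : SGData d m) (α : ℝ) (hist : ℕ → Fin m → ℝ) (H : ℕ) : ℕ → Fin m → ℝ
  | 0 => hist (H - 1)
  | k + 1 =>
    p.phi α hist H k
      + α • Matrix.vecMul (p.GLamOn hist H k - p.g k (p.phi α hist H k))
          (p.Dg k (p.phi α hist H k))

/-- History of online λ-SG iterates: `hist α t s = θ^{⟨s⟩}` for all `s ≤ t`,
with `θ^{⟨0⟩} = θ0` and `θ^{⟨t+1⟩} = φ_{t+1}` from the inner pass at horizon `t+1`. -/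
def hist (p : SGData d m) (α : ℝ) : ℕ → ℕ → Fin m → ℝ
  | 0 => fun _ => p.θ0
  | t + 1 => Function.update (p.hist α t) (t + 1) (p.phi α (p.hist α t) (t + 1) (t + 1))

/-- The online λ-SG iterate `θ_t^λ(α) = θ^{⟨t⟩}`. -/
def θon (p : SGData d m) (α : ℝ) (t : ℕ) : Fin m → ℝ := p.hist α t t

end SGData

namespace SGData

variable {d m : ℕ} (p : SGData d m)

lemma P_self (a : ℕ) : p.P a a = 1 := by simp [P, Pfrom]

lemma P_succ {a s : ℕ} (h : a ≤ s) : p.P (s+1) a = p.J s * p.P s a := by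
  have h1 : s + 1 - a = (s - a) + 1 := by omega
  have h2 : a + (s - a) = s := by omega
  rw [P, h1, Pfrom, h2, P]

lemma P_succ_self (a : ℕ) : p.P (a+1) a = p.J a := by
  rw [P_succ p le_rfl, P_self, mul_one]

lemma Pfrom_mul_J (a n : ℕ) : p.Pfrom (a+1) n * p.J a = p.Pfrom a (n+1) := by
  induction n with
  | zero => simp [Pfrom]
  | succ n ih =>
    have : a + 1 + n = a + (n + 1) := by omega
    rw [Pfrom, mul_assoc, ih, this, ← Pfrom]

lemma P_mul_J {a b : ℕ} (h : a < b) : p.P b (a+1) * p.J a = p.P b a := by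
  have h1 : b - a = (b - (a+1)) + 1 := by omega
  rw [P, P, h1, Pfrom_mul_J]

lemma vecMul_smulM (x : Fin d → ℝ) (c : ℝ) (M : Matrix (Fin d) (Fin m) ℝ) :
    Matrix.vecMul x (c • M) = c • Matrix.vecMul x M := by
  ext j
  simp [Matrix.vecMul, dotProduct, Finset.mul_sum]
  exact Finset.sum_congr rfl fun i _ => by ring

lemma vecMul_sumM {ι : Type*} (x : Fin d → ℝ) (s : Finset ι)
    (M : ι → Matrix (Fin d) (Fin m) ℝ) :
    Matrix.vecMul x (∑ i ∈ s, M i) = ∑ i ∈ s, Matrix.vecMul x (M i) := by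
  ext j
  simp only [Matrix.vecMul, dotProduct, Finset.sum_apply, Matrix.sum_apply,
    Finset.mul_sum]
  rw [Finset.sum_comm]

/-- eligibility trace at α = 0 -/
def ebar (p : SGData d m) (s : ℕ) : Matrix (Fin d) (Fin m) ℝ := (p.BPstate 0 s).2

lemma BPstate_zero_fst (s : ℕ) : (p.BPstate 0 s).1 = p.θ0 := by
  induction s with
  | zero => rfl
  | succ s ih => simp [BPstate, ih]

lemma ebar_zero : p.ebar 0 = p.Dg 0 p.θ0 := rfl

lemma ebar_succ (s : ℕ) :
    p.ebar (s+1) = (p.γ * p.lam) • (p.J s * p.ebar s) + p.Dg (s+1) p.θ0 := by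
  have h := p.BPstate_zero_fst (s+1)
  simp only [ebar, BPstate]
  rw [show ((p.BPstate 0 s).1 + (0:ℝ) • Matrix.vecMul (p.tdErr s (p.BPstate 0 s).1)
      (p.BPstate 0 s).2) = p.θ0 by
    simpa [BPstate] using h]

lemma ebar_eq (s : ℕ) :
    p.ebar s = ∑ a ∈ Finset.range (s+1),
      (p.γ * p.lam) ^ (s - a) • (p.P s a * p.Dg a p.θ0) := by
  induction s with
  | zero => simp [ebar_zero, P_self]
  | succ s ih =>
    rw [ebar_succ, ih, Matrix.mul_sum, Finset.sum_range_succ (n := s+1)]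
    congr 1
    · rw [Finset.smul_sum]
      refine Finset.sum_congr rfl fun a ha => ?_
      have ha' : a ≤ s := by simpa [Nat.lt_succ_iff] using ha
      rw [Matrix.mul_smul, smul_smul, ← Matrix.mul_assoc, ← P_succ p ha',
        ← pow_succ']
      congr 2
      omega
    · simp [P_self]

lemma Gbar_zero (a : ℕ) : p.Gbar a 0 = p.g a p.θ0 := by
  simp [Gbar, P_self, Matrix.vecMul_one]

lemma sumv_vecMul {k : ℕ} {ι : Type*} (s : Finset ι) (v : ι → Fin d → ℝ)
    (M : Matrix (Fin d) (Fin k) ℝ) :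
    Matrix.vecMul (∑ i ∈ s, v i) M = ∑ i ∈ s, Matrix.vecMul (v i) M := by
  ext j
  simp only [Matrix.vecMul, dotProduct, Finset.sum_apply, Finset.sum_mul]
  rw [Finset.sum_comm]

lemma Gbar_succ (a n : ℕ) :
    p.Gbar a (n+1) =
      Matrix.vecMul (p.c (a+1) + p.γ • p.Gbar (a+1) n) (p.J a) := by
  conv_rhs => rw [Gbar]
  rw [Matrix.add_vecMul, Matrix.smul_vecMul, Matrix.add_vecMul, sumv_vecMul]
  simp only [Matrix.smul_vecMul, Matrix.vecMul_vecMul]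
  rw [show (∑ k ∈ Finset.range n, p.γ ^ k •
        Matrix.vecMul (p.c (a+1+k+1)) (p.P (a+1+k+1) (a+1) * p.J a) : Fin d → ℝ)
      = ∑ k ∈ Finset.range n, p.γ ^ k •
        Matrix.vecMul (p.c (a+(k+1)+1)) (p.P (a+(k+1)+1) a) from
    Finset.sum_congr rfl fun k _ => by
      rw [p.P_mul_J (by omega), show a+1+k+1 = a+(k+1)+1 by omega]]
  rw [p.P_mul_J (show a < a+1+n by omega), show a+1+n = a+(n+1) by omega]
  rw [Gbar, Finset.sum_range_succ'
    (fun k => p.γ ^ k • Matrix.vecMul (p.c (a+k+1)) (p.P (a+k+1) a)) n]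
  simp only [pow_zero, one_smul, Nat.add_zero]
  rw [P_succ_self]
  rw [smul_add, Finset.smul_sum]
  simp only [smul_smul, ← pow_succ']
  abel


lemma sum_geom_aux {M : Type*} [AddCommGroup M] [Module ℝ M]
    (lam gc : ℝ) (n : ℕ) (cJ : M) (u : ℕ → M) :
    ∑ k ∈ Finset.range (n+1), lam ^ k • (cJ + gc • u k)
      = (∑ k ∈ Finset.range (n+1), lam ^ k) • cJ + gc • u 0
        + (lam * gc) • ∑ k ∈ Finset.range n, lam ^ k • u (k+1) := by
  induction n with
  | zero => simp
  | succ n ih =>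
    rw [Finset.sum_range_succ, ih, Finset.sum_range_succ (n := n+1),
      Finset.sum_range_succ (f := fun k => lam ^ k • u (k+1))]
    match_scalars <;> ring

lemma combo {M : Type*} [AddCommGroup M] [Module ℝ M]
    (lam gc : ℝ) (n : ℕ) (cJ : M) (u : ℕ → M) :
    (1-lam) • ∑ k ∈ Finset.range (n+1), lam ^ k • (cJ + gc • u k)
      + lam ^ (n+1) • (cJ + gc • u (n+1))
    = cJ + gc • ((1-lam) • u 0
        + lam • ((1-lam) • ∑ k ∈ Finset.range n, lam ^ k • u (k+1)
          + lam ^ n • u (n+1))) := by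
  have hgeom : (1-lam) * ∑ k ∈ Finset.range (n+1), lam ^ k = 1 - lam ^ (n+1) := by
    have := geom_sum_mul lam (n+1)
    linear_combination -this
  rw [sum_geom_aux]
  match_scalars
  · linear_combination hgeom
  all_goals ring


lemma GbarLam_rec (a n : ℕ) :
    p.GbarLam a (a+n+2)
      = Matrix.vecMul (p.c (a+1) + p.γ • ((1 - p.lam) • p.g (a+1) p.θ0
          + p.lam • p.GbarLam (a+1) (a+n+2))) (p.J a) := by
  have hL : p.GbarLam a (a+n+2)
      = (1-p.lam) • ∑ k ∈ Finset.range (n+1), p.lam ^ k • p.Gbar a (k+1)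
        + p.lam ^ (n+1) • p.Gbar a (n+1+1) := by
    rw [GbarLam, show a+n+2-a-1 = n+1 by omega, show a+n+2-a = n+1+1 by omega]
  have hR : p.GbarLam (a+1) (a+n+2)
      = (1-p.lam) • ∑ k ∈ Finset.range n, p.lam ^ k • p.Gbar (a+1) (k+1)
        + p.lam ^ n • p.Gbar (a+1) (n+1) := by
    rw [GbarLam, show a+n+2-(a+1)-1 = n by omega, show a+n+2-(a+1) = n+1 by omega]
  rw [hL, hR]
  rw [show (∑ k ∈ Finset.range (n+1), p.lam ^ k • p.Gbar a (k+1))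
      = ∑ k ∈ Finset.range (n+1), p.lam ^ k •
          (Matrix.vecMul (p.c (a+1)) (p.J a)
            + p.γ • Matrix.vecMul (p.Gbar (a+1) k) (p.J a)) from
    Finset.sum_congr rfl fun k _ => by
      rw [Gbar_succ, Matrix.add_vecMul, Matrix.smul_vecMul]]
  rw [Gbar_succ p a (n+1), ← Gbar_zero p (a+1)]
  simp only [Matrix.add_vecMul, Matrix.smul_vecMul, sumv_vecMul]
  exact combo p.lam p.γ n _ _

lemma GbarLam_sub (n : ℕ) : ∀ a, p.GbarLam a (a+n+1) - p.g a p.θ0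
    = ∑ s ∈ Finset.range (n+1),
        (p.γ * p.lam) ^ s • Matrix.vecMul (p.tdErr (a+s) p.θ0) (p.P (a+s) a) := by
  induction n with
  | zero =>
    intro a
    have h0 : p.GbarLam a (a+0+1) = p.Gbar a 1 := by
      rw [GbarLam, show a+0+1-a-1 = 0 by omega, show a+0+1-a = 1 by omega]
      simp
    rw [h0, Gbar_succ, Gbar_zero]
    simp [tdErr, P_self, Matrix.vecMul_one]
  | succ n ih =>
    intro a
    rw [show a+(n+1)+1 = a+n+2 by omega, p.GbarLam_rec a n]
    have ih' := ih (a+1)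
    rw [show a+1+n+1 = a+n+2 by omega] at ih'
    have hG : p.GbarLam (a+1) (a+n+2)
        = p.g (a+1) p.θ0 + ∑ s ∈ Finset.range (n+1),
            (p.γ * p.lam) ^ s •
              Matrix.vecMul (p.tdErr (a+1+s) p.θ0) (p.P (a+1+s) (a+1)) := by
      rw [← ih']; abel
    rw [hG]
    -- peel the s = 0 term of the RHS
    rw [Finset.sum_range_succ'
      (fun s => (p.γ * p.lam) ^ s •
        Matrix.vecMul (p.tdErr (a+s) p.θ0) (p.P (a+s) a)) (n+1)]
    simp only [pow_zero, one_smul, Nat.add_zero, P_self, Matrix.vecMul_one]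
    -- expand the left-hand side
    simp only [Matrix.add_vecMul, Matrix.smul_vecMul, sumv_vecMul,
      Matrix.vecMul_vecMul, smul_add]
    rw [show (∑ s ∈ Finset.range (n+1), (p.γ * p.lam) ^ s •
          Matrix.vecMul (p.tdErr (a+1+s) p.θ0) (p.P (a+1+s) (a+1) * p.J a))
        = ∑ s ∈ Finset.range (n+1), (p.γ * p.lam) ^ s •
          Matrix.vecMul (p.tdErr (a+(s+1)) p.θ0) (p.P (a+(s+1)) a) from
      Finset.sum_congr rfl fun s _ => by
        rw [p.P_mul_J (by omega), show a+1+s = a+(s+1) by omega]]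
    simp only [pow_succ', mul_smul]
    rw [← Finset.smul_sum, ← Finset.smul_sum]
    have hA : p.tdErr a p.θ0
        = Matrix.vecMul (p.c (a+1)) (p.J a)
          + p.γ • Matrix.vecMul (p.g (a+1) p.θ0) (p.J a) - p.g a p.θ0 := by
      rw [tdErr, Matrix.add_vecMul, Matrix.smul_vecMul]
    rw [hA]
    module


lemma sum_triangle {M : Type*} [AddCommMonoid M] (t : ℕ) (f : ℕ → ℕ → M) :
    ∑ s ∈ Finset.range t, ∑ a ∈ Finset.range (s+1), f s a
      = ∑ a ∈ Finset.range t, ∑ s ∈ Finset.Ico a t, f s a := by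
  induction t with
  | zero => simp
  | succ t ih =>
    rw [Finset.sum_range_succ, ih]
    rw [show (∑ a ∈ Finset.range (t+1), ∑ s ∈ Finset.Ico a (t+1), f s a)
        = ∑ a ∈ Finset.range (t+1), ((∑ s ∈ Finset.Ico a t, f s a) + f t a) from
      Finset.sum_congr rfl fun a ha => by
        have h' := Finset.mem_range.mp ha
        rw [Finset.sum_Ico_succ_top (by omega : a ≤ t)]]
    rw [Finset.sum_add_distrib, Finset.sum_range_succ
      (fun a => ∑ s ∈ Finset.Ico a t, f s a) t]
    simp

lemma V_eq (t : ℕ) :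
    ∑ s ∈ Finset.range t, Matrix.vecMul (p.tdErr s p.θ0) (p.ebar s)
      = ∑ a ∈ Finset.range t, p.Δbar a t := by
  have hstep : ∀ s : ℕ, Matrix.vecMul (p.tdErr s p.θ0) (p.ebar s)
      = ∑ a ∈ Finset.range (s+1), (p.γ * p.lam) ^ (s-a) •
          Matrix.vecMul (p.tdErr s p.θ0) (p.P s a * p.Dg a p.θ0) := by
    intro s
    rw [ebar_eq, vecMul_sumM]
    exact Finset.sum_congr rfl fun a _ => by rw [vecMul_smulM]
  simp only [hstep]
  rw [sum_triangle]
  refine Finset.sum_congr rfl fun a ha => ?_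
  have hat : a < t := Finset.mem_range.mp ha
  rw [Finset.sum_Ico_eq_sum_range]
  rw [show t - a = (t-a-1)+1 by omega]
  have hkey := p.GbarLam_sub (t-a-1) a
  rw [show a+(t-a-1)+1 = t by omega] at hkey
  simp only [Δbar]
  rw [hkey, sumv_vecMul]
  simp only [Matrix.smul_vecMul, Matrix.vecMul_vecMul]
  exact Finset.sum_congr rfl fun i _ => by rw [show a+i-a = i by omega]


/-! ### Analysis -/

attribute [local instance] Matrix.normedAddCommGroup Matrix.normedSpace

lemma euclNorm_le {k : ℕ} (x : Fin k → ℝ) : euclNorm x ≤ Real.sqrt k * ‖x‖ := by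
  have h1 : ∑ i, x i ^ 2 ≤ (k : ℝ) * ‖x‖ ^ 2 := by
    calc ∑ i, x i ^ 2 ≤ ∑ _i : Fin k, ‖x‖ ^ 2 := by
          refine Finset.sum_le_sum fun i _ => ?_
          have : |x i| ≤ ‖x‖ := by
            simpa [Real.norm_eq_abs] using norm_le_pi_norm x i
          calc x i ^ 2 = |x i| ^ 2 := (sq_abs _).symm
            _ ≤ ‖x‖ ^ 2 := pow_le_pow_left₀ (abs_nonneg _) this 2
      _ = (k : ℝ) * ‖x‖ ^ 2 := by simp [mul_comm]
  calc euclNorm x ≤ Real.sqrt ((k : ℝ) * ‖x‖ ^ 2) := Real.sqrt_le_sqrt h1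
    _ = Real.sqrt k * ‖x‖ := by
        rw [Real.sqrt_mul (by positivity), Real.sqrt_sq (norm_nonneg _)]

lemma norm_vecMul_le {k : ℕ} (x : Fin d → ℝ) (A : Matrix (Fin d) (Fin k) ℝ) :
    ‖Matrix.vecMul x A‖ ≤ (d : ℝ) * ‖x‖ * ‖A‖ := by
  refine (pi_norm_le_iff_of_nonneg (by positivity)).2 fun j => ?_
  have : Matrix.vecMul x A j = ∑ i, x i * A i j := by
    simp [Matrix.vecMul, dotProduct]
  rw [this]
  calc ‖∑ i, x i * A i j‖ ≤ ∑ i, ‖x i * A i j‖ := norm_sum_le _ _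
    _ ≤ ∑ _i : Fin d, ‖x‖ * ‖A‖ := by
        refine Finset.sum_le_sum fun i _ => ?_
        rw [norm_mul]
        gcongr
        · exact norm_le_pi_norm x i
        · exact A.norm_entry_le_entrywise_sup_norm
    _ = (d : ℝ) * (‖x‖ * ‖A‖) := by simp [mul_comm]
    _ = (d : ℝ) * ‖x‖ * ‖A‖ := by ring

lemma norm_matMul_le {k : ℕ} (A : Matrix (Fin d) (Fin d) ℝ) (B : Matrix (Fin d) (Fin k) ℝ) :
    ‖A * B‖ ≤ (d : ℝ) * ‖A‖ * ‖B‖ := by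
  refine (Matrix.norm_le_iff (by positivity)).2 fun i j => ?_
  rw [Matrix.mul_apply]
  calc ‖∑ l, A i l * B l j‖ ≤ ∑ l, ‖A i l * B l j‖ := norm_sum_le _ _
    _ ≤ ∑ _l : Fin d, ‖A‖ * ‖B‖ := by
        refine Finset.sum_le_sum fun l _ => ?_
        rw [norm_mul]
        gcongr
        · exact A.norm_entry_le_entrywise_sup_norm
        · exact B.norm_entry_le_entrywise_sup_norm
    _ = (d : ℝ) * (‖A‖ * ‖B‖) := by simp [mul_comm]
    _ = (d : ℝ) * ‖A‖ * ‖B‖ := by ring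

lemma lip_of_contDiff {E F : Type*} [NormedAddCommGroup E] [NormedSpace ℝ E]
    [NormedAddCommGroup F] [NormedSpace ℝ F]
    (f : E → F) (hf : ContDiff ℝ 1 f) (x0 : E) :
    ∃ L r : ℝ, 0 < r ∧ 0 ≤ L ∧ ∀ x, ‖x - x0‖ ≤ r → ‖f x - f x0‖ ≤ L * ‖x - x0‖ := by
  obtain ⟨K, t, ht, hK⟩ := hf.locallyLipschitz x0
  obtain ⟨ε, hε, hball⟩ := Metric.mem_nhds_iff.1 ht
  refine ⟨K, ε/2, by positivity, K.coe_nonneg, fun x hx => ?_⟩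
  have hx0 : x0 ∈ t := hball (Metric.mem_ball_self hε)
  have hxt : x ∈ t := hball (by
    rw [Metric.mem_ball, dist_eq_norm]
    linarith)
  have := hK.dist_le_mul x hxt x0 hx0
  rwa [dist_eq_norm, dist_eq_norm] at this

lemma contDiff_tdErr (hg : ∀ t : ℕ, ContDiff ℝ 2 (p.g t)) (s : ℕ) :
    ContDiff ℝ 1 (p.tdErr s) := by
  refine contDiff_pi.mpr fun j => ?_
  have hrw : (fun θ => p.tdErr s θ j)
      = fun θ => (∑ i, (p.c (s+1) i + p.γ * p.g (s+1) θ i) * p.J s i j)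
          - p.g s θ j := by
    funext θ
    simp [tdErr, Matrix.vecMul, dotProduct]
  rw [hrw]
  exact (ContDiff.sum fun i _ =>
    ((contDiff_const.add (contDiff_const.mul
      (contDiff_pi.mp ((hg (s+1)).of_le one_le_two) i))).mul contDiff_const)).sub
    (contDiff_pi.mp ((hg s).of_le one_le_two) j)

lemma contDiff_Dg_entries (hg : ∀ t : ℕ, ContDiff ℝ 2 (p.g t)) (s : ℕ) :
    ContDiff ℝ 1 (fun θ => (fun i j => p.Dg s θ i j : Fin d → Fin m → ℝ)) := by
  refine contDiff_pi.mpr fun i => contDiff_pi.mpr fun j => ?_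
  have hD : ContDiff ℝ 1 (fderiv ℝ (p.g s)) :=
    (hg s).fderiv_right (m := 1) (by norm_num)
  have hclm : ContDiff ℝ 1 (fun L : (Fin m → ℝ) →L[ℝ] (Fin d → ℝ) =>
      L (Pi.single j 1) i) := by
    have h1 : ContDiff ℝ 1 (fun L : (Fin m → ℝ) →L[ℝ] (Fin d → ℝ) =>
        L (Pi.single j 1)) :=
      contDiff_id.clm_apply contDiff_const
    exact contDiff_pi.mp h1 i
  exact hclm.comp hD

lemma lip_Dg (hg : ∀ t : ℕ, ContDiff ℝ 2 (p.g t)) (s : ℕ) (x0 : Fin m → ℝ) :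
    ∃ L r : ℝ, 0 < r ∧ 0 ≤ L ∧ ∀ x, ‖x - x0‖ ≤ r →
      ‖p.Dg s x - p.Dg s x0‖ ≤ L * ‖x - x0‖ := by
  obtain ⟨L, r, hr, hL, h⟩ := lip_of_contDiff _ (p.contDiff_Dg_entries hg s) x0
  refine ⟨L, r, hr, hL, fun x hx => ?_⟩
  refine (Matrix.norm_le_iff (mul_nonneg hL (norm_nonneg _))).2 fun i j => ?_
  have h1 := h x hx
  have h2 : ‖p.Dg s x i j - p.Dg s x0 i j‖
      ≤ ‖(fun i j => p.Dg s x i j : Fin d → Fin m → ℝ)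
          - (fun i j => p.Dg s x0 i j)‖ := by
    have := norm_le_pi_norm ((fun i j => p.Dg s x i j : Fin d → Fin m → ℝ)
          - (fun i j => p.Dg s x0 i j)) i
    have h3 := norm_le_pi_norm (((fun i j => p.Dg s x i j : Fin d → Fin m → ℝ)
          - (fun i j => p.Dg s x0 i j)) i) j
    simpa using h3.trans this
  exact h2.trans h1


set_option maxHeartbeats 2000000 in
lemma BP_expansion (hg : ∀ t : ℕ, ContDiff ℝ 2 (p.g t)) (t : ℕ) :
    ∃ C : ℝ, 0 < C ∧ ∃ ε : ℝ, 0 < ε ∧ ∀ α : ℝ, 0 ≤ α → α ≤ ε →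
      ‖(p.BPstate α t).1 - p.θ0 - α • ∑ s ∈ Finset.range t,
          Matrix.vecMul (p.tdErr s p.θ0) (p.ebar s)‖ ≤ C * α ^ 2 ∧
      ‖(p.BPstate α t).2 - p.ebar t‖ ≤ C * α := by
  induction t with
  | zero =>
    refine ⟨1, one_pos, 1, one_pos, fun α hα hα1 => ⟨?_, ?_⟩⟩
    · have h0 : (p.BPstate α 0).1 - p.θ0 - α • (0 : Fin m → ℝ) = 0 := by
        simp [BPstate]
      simp only [Finset.range_zero, Finset.sum_empty, h0, norm_zero]
      positivity
    · have h0 : (p.BPstate α 0).2 - p.ebar 0 = 0 := by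
        simp [BPstate, ebar]
      rw [h0, norm_zero]
      positivity
  | succ t ih =>
    obtain ⟨C, hC, ε, hε, H⟩ := ih
    obtain ⟨L1, r1, hr1, hL1, h1⟩ := lip_of_contDiff _ (p.contDiff_tdErr hg t) p.θ0
    obtain ⟨L2, r2, hr2, hL2, h2⟩ := p.lip_Dg hg (t+1) p.θ0
    set V : Fin m → ℝ :=
      ∑ s ∈ Finset.range t, Matrix.vecMul (p.tdErr s p.θ0) (p.ebar s) with hV
    set ub : Fin m → ℝ := Matrix.vecMul (p.tdErr t p.θ0) (p.ebar t) with hub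
    set M : ℝ := ‖V‖ + C * ε with hM
    have hM0 : 0 ≤ M := add_nonneg (norm_nonneg _) (mul_nonneg hC.le hε.le)
    set Be : ℝ := ‖p.ebar t‖ + C * ε with hBe
    have hBe0 : 0 ≤ Be := add_nonneg (norm_nonneg _) (mul_nonneg hC.le hε.le)
    set C1 : ℝ := (d:ℝ) * (L1 * M) * Be + (d:ℝ) * ‖p.tdErr t p.θ0‖ * C with hC1
    have hC10 : 0 ≤ C1 :=
      add_nonneg (mul_nonneg (mul_nonneg (by positivity) (mul_nonneg hL1 hM0)) hBe0)
        (mul_nonneg (mul_nonneg (by positivity) (norm_nonneg _)) hC.le)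
    set M2 : ℝ := M + (‖ub‖ + C1 * ε) with hM2
    have hM20 : 0 ≤ M2 :=
      add_nonneg hM0 (add_nonneg (norm_nonneg _) (mul_nonneg hC10 hε.le))
    set C2 : ℝ := |p.γ * p.lam| * ((d:ℝ) * ‖p.J t‖ * C) + L2 * M2 with hC2
    have hC20 : 0 ≤ C2 :=
      add_nonneg (mul_nonneg (abs_nonneg _)
        (mul_nonneg (mul_nonneg (by positivity) (norm_nonneg _)) hC.le))
        (mul_nonneg hL2 hM20)
    refine ⟨C + C1 + C2 + 1, by linarith, min ε (min (r1/(M+1)) (r2/(M2+1))),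
      lt_min hε (lt_min (div_pos hr1 (by linarith)) (div_pos hr2 (by linarith))),
      fun α hα0 hαle => ?_⟩
    have hαε : α ≤ ε := hαle.trans (min_le_left _ _)
    have hα1 : α ≤ r1/(M+1) := hαle.trans ((min_le_right _ _).trans (min_le_left _ _))
    have hα2 : α ≤ r2/(M2+1) := hαle.trans ((min_le_right _ _).trans (min_le_right _ _))
    obtain ⟨hθ, he⟩ := H α hα0 hαε
    have hαsq : C * α^2 ≤ (C*ε) * α := by
      nlinarith [mul_le_mul_of_nonneg_left hαε (mul_nonneg hC.le hα0)]
    have F1 : ‖(p.BPstate α t).1 - p.θ0‖ ≤ M * α := by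
      calc ‖(p.BPstate α t).1 - p.θ0‖
          = ‖((p.BPstate α t).1 - p.θ0 - α • V) + α • V‖ := by rw [sub_add_cancel]
        _ ≤ ‖(p.BPstate α t).1 - p.θ0 - α • V‖ + ‖α • V‖ := norm_add_le _ _
        _ ≤ C * α^2 + α * ‖V‖ := by
            rw [norm_smul, Real.norm_eq_abs, abs_of_nonneg hα0]
            exact add_le_add hθ le_rfl
        _ ≤ M * α := by nlinarith [norm_nonneg V]
    have hMr1 : M * α ≤ r1 := by
      have h' : α * (M+1) ≤ r1 := by
        rw [← le_div_iff₀ (by linarith : (0:ℝ) < M+1)]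
        exact hα1
      nlinarith
    have F2 : ‖p.tdErr t (p.BPstate α t).1 - p.tdErr t p.θ0‖ ≤ L1 * (M * α) :=
      (h1 _ (F1.trans hMr1)).trans (mul_le_mul_of_nonneg_left F1 hL1)
    have F4 : ‖(p.BPstate α t).2‖ ≤ Be := by
      calc ‖(p.BPstate α t).2‖
          = ‖((p.BPstate α t).2 - p.ebar t) + p.ebar t‖ := by rw [sub_add_cancel]
        _ ≤ ‖(p.BPstate α t).2 - p.ebar t‖ + ‖p.ebar t‖ := norm_add_le _ _
        _ ≤ C * α + ‖p.ebar t‖ := add_le_add he le_rfl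
        _ ≤ Be := by
            have : C * α ≤ C * ε := mul_le_mul_of_nonneg_left hαε hC.le
            rw [hBe]; linarith
    have F5 : ‖Matrix.vecMul (p.tdErr t (p.BPstate α t).1) (p.BPstate α t).2 - ub‖
        ≤ C1 * α := by
      have hid : Matrix.vecMul (p.tdErr t (p.BPstate α t).1) (p.BPstate α t).2 - ub
          = Matrix.vecMul (p.tdErr t (p.BPstate α t).1 - p.tdErr t p.θ0)
              (p.BPstate α t).2
            + Matrix.vecMul (p.tdErr t p.θ0) ((p.BPstate α t).2 - p.ebar t) := by
        rw [Matrix.sub_vecMul, Matrix.vecMul_sub, hub]; abel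
      rw [hid]
      calc ‖_ + _‖ ≤ ‖Matrix.vecMul (p.tdErr t (p.BPstate α t).1 - p.tdErr t p.θ0)
              (p.BPstate α t).2‖
            + ‖Matrix.vecMul (p.tdErr t p.θ0) ((p.BPstate α t).2 - p.ebar t)‖ :=
          norm_add_le _ _
        _ ≤ (d:ℝ) * ‖p.tdErr t (p.BPstate α t).1 - p.tdErr t p.θ0‖ * ‖(p.BPstate α t).2‖
            + (d:ℝ) * ‖p.tdErr t p.θ0‖ * ‖(p.BPstate α t).2 - p.ebar t‖ :=
          add_le_add (norm_vecMul_le _ _) (norm_vecMul_le _ _)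
        _ ≤ (d:ℝ) * (L1 * (M * α)) * Be + (d:ℝ) * ‖p.tdErr t p.θ0‖ * (C * α) := by
          gcongr
        _ = C1 * α := by rw [hC1]; ring
    have hθs : (p.BPstate α (t+1)).1 = (p.BPstate α t).1
        + α • Matrix.vecMul (p.tdErr t (p.BPstate α t).1) (p.BPstate α t).2 := by
      simp [BPstate]
    have goalθ : ‖(p.BPstate α (t+1)).1 - p.θ0 - α • (V + ub)‖
        ≤ (C + C1 + C2 + 1) * α^2 := by
      have hid2 : (p.BPstate α (t+1)).1 - p.θ0 - α • (V + ub)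
          = ((p.BPstate α t).1 - p.θ0 - α • V)
            + α • (Matrix.vecMul (p.tdErr t (p.BPstate α t).1) (p.BPstate α t).2
                - ub) := by
        rw [hθs]; module
      rw [hid2]
      calc ‖_ + _‖ ≤ ‖(p.BPstate α t).1 - p.θ0 - α • V‖
            + ‖α • (Matrix.vecMul (p.tdErr t (p.BPstate α t).1) (p.BPstate α t).2
                - ub)‖ := norm_add_le _ _
        _ ≤ C * α^2 + α * (C1 * α) := by
            rw [norm_smul, Real.norm_eq_abs, abs_of_nonneg hα0]
            exact add_le_add hθ (mul_le_mul_of_nonneg_left F5 hα0)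
        _ ≤ (C + C1 + C2 + 1) * α^2 := by nlinarith [sq_nonneg α]
    have F7 : ‖(p.BPstate α (t+1)).1 - p.θ0‖ ≤ M2 * α := by
      have hu : ‖Matrix.vecMul (p.tdErr t (p.BPstate α t).1) (p.BPstate α t).2‖
          ≤ ‖ub‖ + C1 * α := by
        calc ‖Matrix.vecMul (p.tdErr t (p.BPstate α t).1) (p.BPstate α t).2‖
            = ‖(Matrix.vecMul (p.tdErr t (p.BPstate α t).1) (p.BPstate α t).2 - ub)
                + ub‖ := by rw [sub_add_cancel]
          _ ≤ C1 * α + ‖ub‖ := (norm_add_le _ _).trans (add_le_add F5 le_rfl)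
          _ = ‖ub‖ + C1 * α := by ring
      have hid4 : (p.BPstate α (t+1)).1 - p.θ0
          = ((p.BPstate α t).1 - p.θ0)
            + α • Matrix.vecMul (p.tdErr t (p.BPstate α t).1) (p.BPstate α t).2 := by
        rw [hθs]; abel
      rw [hid4]
      calc ‖_ + _‖ ≤ ‖(p.BPstate α t).1 - p.θ0‖
            + ‖α • Matrix.vecMul (p.tdErr t (p.BPstate α t).1) (p.BPstate α t).2‖ :=
          norm_add_le _ _
        _ ≤ M * α + α * (‖ub‖ + C1 * α) := by
            rw [norm_smul, Real.norm_eq_abs, abs_of_nonneg hα0]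
            exact add_le_add F1 (mul_le_mul_of_nonneg_left hu hα0)
        _ ≤ M2 * α := by rw [hM2]; nlinarith
    have hMr2 : M2 * α ≤ r2 := by
      have h' : α * (M2+1) ≤ r2 := by
        rw [← le_div_iff₀ (by linarith : (0:ℝ) < M2+1)]
        exact hα2
      nlinarith
    have hes : (p.BPstate α (t+1)).2 = (p.γ * p.lam) • (p.J t * (p.BPstate α t).2)
        + p.Dg (t+1) (p.BPstate α (t+1)).1 := by
      rw [hθs]; simp [BPstate]
    have goale : ‖(p.BPstate α (t+1)).2 - p.ebar (t+1)‖ ≤ (C + C1 + C2 + 1) * α := by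
      have hid3 : (p.BPstate α (t+1)).2 - p.ebar (t+1)
          = (p.γ * p.lam) • (p.J t * ((p.BPstate α t).2 - p.ebar t))
            + (p.Dg (t+1) (p.BPstate α (t+1)).1 - p.Dg (t+1) p.θ0) := by
        rw [hes, ebar_succ, Matrix.mul_sub, smul_sub]; abel
      rw [hid3]
      calc ‖_ + _‖ ≤ ‖(p.γ * p.lam) • (p.J t * ((p.BPstate α t).2 - p.ebar t))‖
            + ‖p.Dg (t+1) (p.BPstate α (t+1)).1 - p.Dg (t+1) p.θ0‖ := norm_add_le _ _
        _ ≤ |p.γ * p.lam| * ((d:ℝ) * ‖p.J t‖ * (C * α)) + L2 * (M2 * α) := by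
            refine add_le_add ?_ ?_
            · rw [norm_smul, Real.norm_eq_abs]
              refine mul_le_mul_of_nonneg_left ?_ (abs_nonneg _)
              calc ‖p.J t * ((p.BPstate α t).2 - p.ebar t)‖
                  ≤ (d:ℝ) * ‖p.J t‖ * ‖(p.BPstate α t).2 - p.ebar t‖ :=
                    norm_matMul_le _ _
                _ ≤ (d:ℝ) * ‖p.J t‖ * (C * α) :=
                    mul_le_mul_of_nonneg_left he (by positivity)
            · exact (h2 _ (F7.trans hMr2)).trans (mul_le_mul_of_nonneg_left F7 hL2)
        _ ≤ (C + C1 + C2 + 1) * α := by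
            have hEq : |p.γ * p.lam| * ((d:ℝ) * ‖p.J t‖ * (C * α)) + L2 * (M2 * α)
                = C2 * α := by rw [hC2]; ring
            rw [hEq]
            nlinarith
    refine ⟨?_, goale⟩
    rw [Finset.sum_range_succ]
    exact goalθ

end SGData

/-- with `γ, λ ∈ [0,1]` and each synthesiser map twice continuously
differentiable, for every `1 ≤ t ≤ T` there exist `K > 0` and `α₀ > 0` such that
for all `0 < α ≤ α₀`,
`‖θ_t^{BP}(α) − θ_0 − α Σ_{a=0}^{t−1} Δ̄_a^t‖₂ ≤ K α²`. -/
theorem BPlam_second_order_expansion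
    {d m : ℕ} (p : SGData d m) (T : ℕ)
    (hγ : p.γ ∈ Set.Icc (0 : ℝ) 1) (hlam : p.lam ∈ Set.Icc (0 : ℝ) 1)
    (hg : ∀ t : ℕ, ContDiff ℝ 2 (p.g t))
    (t : ℕ) (ht1 : 1 ≤ t) (htT : t ≤ T) :
    ∃ K > (0 : ℝ), ∃ α₀ > (0 : ℝ), ∀ α : ℝ, 0 < α → α ≤ α₀ →
      euclNorm (p.θBP α t - p.θ0 - α • ∑ a ∈ Finset.range t, p.Δbar a t) ≤ K * α ^ 2 := by
  obtain ⟨C, hC, ε, hε, H⟩ := p.BP_expansion hg t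
  have hK0 : (0:ℝ) < Real.sqrt m * C + 1 := by
    have : (0:ℝ) ≤ Real.sqrt m * C := mul_nonneg (Real.sqrt_nonneg _) hC.le
    linarith
  refine ⟨Real.sqrt m * C + 1, hK0, ε, hε, fun α hα0 hαε => ?_⟩
  obtain ⟨hθ, -⟩ := H α hα0.le hαε
  rw [p.V_eq t] at hθ
  have hθ' : ‖p.θBP α t - p.θ0 - α • ∑ a ∈ Finset.range t, p.Δbar a t‖ ≤ C * α ^ 2 := hθ
  calc euclNorm (p.θBP α t - p.θ0 - α • ∑ a ∈ Finset.range t, p.Δbar a t)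
      ≤ Real.sqrt m * ‖p.θBP α t - p.θ0 - α • ∑ a ∈ Finset.range t, p.Δbar a t‖ :=
        SGData.euclNorm_le _
    _ ≤ Real.sqrt m * (C * α ^ 2) :=
        mul_le_mul_of_nonneg_left hθ' (Real.sqrt_nonneg _)
    _ ≤ (Real.sqrt m * C + 1) * α ^ 2 := by nlinarith [sq_nonneg α]

end
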